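/- Let A be a Banach algebra with a right identity e, and let d : A → A be a Jordan left derivation. Then d(e) = 0 and d(r) ∈ ran(A) for every r ∈ ran(A). -/
import Mathlib


/-- Let `A` be a complex Banach algebra with a right identity `e`, and let
`d : A → A` be a Jordan left derivation (`d (a²) = 2 • (a * d a)`).  Then `d e = 0` and
`d r ∈ ran(A)` for every `r` in the right annihilator `ran(A) = {x | ∀ a, a * x = 0}`. -/
theorem jordanLeftDerivation_rightIdentity_and_annihilator
    {A : Type*} [NonUnitalNormedRing A] [NormedSpace ℂ A]
    [IsScalarTower ℂ A A] [SMulCommClass ℂ A A] [CompleteSpace A]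
    (e : A) (he : ∀ a : A, a * e = a)
    (d : A →ₗ[ℂ] A) (hd : ∀ a : A, d (a * a) = 2 • (a * d a)) :
    d e = 0 ∧ ∀ r : A, (∀ a : A, a * r = 0) → ∀ a : A, a * d r = 0 := by
  have he2 : e * e = e := he e
  have F1 : d e = e * d e + e * d e := by
    have h := hd e
    rw [he2, two_smul] at h
    exact h
  have hec : e * d e = 0 := by
    have h2 : e * d e = e * d e + e * d e := by
      calc e * d e = e * (e * d e + e * d e) := by rw [← F1]
        _ = e * d e + e * d e := by rw [mul_add, ← mul_assoc, he2]
    exact add_eq_left.mp h2.symm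
  have hde : d e = 0 := by rw [F1, hec, add_zero]
  refine ⟨hde, fun r hr a => ?_⟩
  have key : (r + e) * (r + e) = r + e := by
    rw [add_mul, mul_add, mul_add, hr r, hr e, he r, he2, zero_add, zero_add]
  have h := hd (r + e)
  rw [key, map_add, hde, add_zero, two_smul] at h
  have hae : a * (r + e) = a := by rw [mul_add, hr a, he a, zero_add]
  have h3 : a * d r = a * d r + a * d r := by
    calc a * d r = a * ((r + e) * d r + (r + e) * d r) := by rw [← h]
      _ = a * d r + a * d r := by rw [mul_add, ← mul_assoc, hae]
  exact add_eq_left.mp h3.symm
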